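/- Let ψ be an N-function on ℝ_{≥0} with Fenchel conjugate ψ*, and suppose ψ* satisfies the Δ₂-condition with constant K. Let c ≥ 0 and define the shifted conjugate (ψ_c)* as the conjugate of the shifted function ψ_c(t) = ∫₀ᵗ ψ'(c+s)·(s/(c+s)) ds. In the special case ψ(t) = ∫₀ᵗ (δ+s)^{p-2}s ds with p > 1 and δ ≥ 0, show: for all λ ∈ [0,1] and t ≥ 0, (ψ_c)*(λt) ≤ C·max{λ^{p'}, λ²}·(ψ_c)*(t), where C depends only on p and p' = p/(p−1). -/

import Mathlib

/-- The Fenchel conjugate `ψ*(t) = sup_{s ≥ 0} (s t − ψ s)`. -/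
noncomputable def fconj (ψ : ℝ → ℝ) (t : ℝ) : ℝ :=
  sSup ((fun s => s * t - ψ s) '' Set.Ici 0)

/-- The shifted N-function `ψ_c(t) = ∫₀ᵗ ψ'(c+s) · s/(c+s) ds` in the special
case `ψ(t) = ∫₀ᵗ (δ+s)^(p-2) s ds`, i.e. `ψ'(r) = (δ+r)^(p-2) r`. -/
noncomputable def shiftPhi (p δ c t : ℝ) : ℝ :=
  ∫ s in (0:ℝ)..t, ((δ + (c + s)) ^ (p - 2) * (c + s)) * (s / (c + s))

namespace Stmt13Aux

open Real Set MeasureTheory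

/-- The clean integrand. -/
noncomputable def g (p d r : ℝ) : ℝ := (d + r) ^ (p - 2) * r

/-- The clean shifted function. -/
noncomputable def Phi (p d t : ℝ) : ℝ := ∫ r in (0:ℝ)..t, g p d r

variable {p d : ℝ}

lemma g_nonneg (hd : 0 ≤ d) {r : ℝ} (hr : 0 ≤ r) : 0 ≤ g p d r :=
  mul_nonneg (Real.rpow_nonneg (by linarith) _) hr

lemma rpow_mul_self (hp : 1 < p) {x : ℝ} (hx : 0 ≤ x) : x ^ (p - 2) * x = x ^ (p - 1) := by
  rcases eq_or_lt_of_le hx with h | h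
  · rw [← h, Real.zero_rpow (by intro h'; rw [sub_eq_zero] at h'; linarith : p - 1 ≠ 0), mul_zero]
  · rw [show p - 1 = (p - 2) + 1 by ring, Real.rpow_add_one (ne_of_gt h)]

lemma g_contOn (hp : 1 < p) (hd : 0 ≤ d) : ContinuousOn (g p d) (Ici 0) := by
  rcases eq_or_lt_of_le hd with h | h
  · have heq : EqOn (g p d) (fun r : ℝ => r ^ (p - 1)) (Ici 0) := by
      intro r hr
      simp only [g, ← h, zero_add]
      exact rpow_mul_self hp hr
    refine ContinuousOn.congr ?_ heq
    intro x hx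
    exact (Real.continuousAt_rpow_const x (p - 1) (Or.inr (by linarith))).continuousWithinAt
  · refine ContinuousOn.mul ?_ continuousOn_id
    intro x hx
    have hx0 : (0:ℝ) ≤ x := hx
    have : ContinuousAt (fun r : ℝ => (d + r) ^ (p - 2)) x := by
      have h1 : ContinuousAt (fun r : ℝ => d + r) x := continuousAt_const.add continuousAt_id
      have h2 : ContinuousAt (fun y : ℝ => y ^ (p - 2)) (d + x) :=
        Real.continuousAt_rpow_const _ _ (Or.inl (by linarith))
      exact h2.comp h1
    exact this.continuousWithinAt

lemma g_intble (hp : 1 < p) (hd : 0 ≤ d) {a b : ℝ} (ha : 0 ≤ a) (hb : 0 ≤ b) :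
    IntervalIntegrable (g p d) volume a b :=
  ((g_contOn hp hd).mono (fun x hx => le_trans (le_inf ha hb) hx.1)).intervalIntegrable

lemma Phi_zero : Phi p d 0 = 0 := intervalIntegral.integral_same

lemma Phi_nonneg (hd : 0 ≤ d) {t : ℝ} (ht : 0 ≤ t) : 0 ≤ Phi p d t :=
  intervalIntegral.integral_nonneg ht (fun u hu => g_nonneg hd hu.1)

lemma shiftPhi_eq (p δ c t : ℝ) (hδ : 0 ≤ δ) (hc : 0 ≤ c) (ht : 0 ≤ t) :
    shiftPhi p δ c t = Phi p (δ + c) t := by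
  unfold shiftPhi Phi g
  apply intervalIntegral.integral_congr
  rw [Set.uIcc_of_le ht]
  intro s hs
  have hs0 : 0 ≤ s := hs.1
  have hb : δ + (c + s) = δ + c + s := by ring
  simp only [hb]
  rcases eq_or_lt_of_le (add_nonneg hc hs0) with h | h
  · have hc0 : c = 0 := by linarith
    have hss : s = 0 := by linarith
    simp [hc0, hss]
  · rw [mul_assoc, mul_comm (c + s), div_mul_cancel₀ _ (ne_of_gt h)]

lemma g_scale (hp : 1 < p) (hd : 0 ≤ d) {m r : ℝ} (hm0 : 0 < m) (hm1 : m ≤ 1) (hr : 0 ≤ r) :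
    m ^ (max p 2 - 1) * g p d r ≤ g p d (m * r) := by
  rcases eq_or_lt_of_le hr with h | h
  · rw [← h]; simp [g]
  unfold g
  have hdr : (0:ℝ) ≤ d + r := by linarith
  have key : m ^ (max p 2 - 2) * (d + r) ^ (p - 2) ≤ (d + m * r) ^ (p - 2) := by
    rcases le_total 2 p with h2 | h2
    · rw [max_eq_left h2]
      calc m ^ (p - 2) * (d + r) ^ (p - 2) = (m * (d + r)) ^ (p - 2) :=
            (Real.mul_rpow hm0.le hdr).symm
        _ ≤ (d + m * r) ^ (p - 2) := by
            apply Real.rpow_le_rpow (by positivity) (by nlinarith) (by linarith)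
    · rw [max_eq_right h2]
      have h22 : (2:ℝ) - 2 = 0 := by ring
      rw [h22, Real.rpow_zero, one_mul]
      have hpos : 0 < d + m * r := add_pos_of_nonneg_of_pos hd (mul_pos hm0 h)
      exact Real.rpow_le_rpow_of_nonpos hpos (by nlinarith) (by linarith)
  have hm' : m ^ (max p 2 - 1) = m ^ (max p 2 - 2) * m := by
    rw [show max p 2 - 1 = (max p 2 - 2) + 1 by ring, Real.rpow_add_one hm0.ne']
  rw [hm']
  calc m ^ (max p 2 - 2) * m * ((d + r) ^ (p - 2) * r)
      = (m ^ (max p 2 - 2) * (d + r) ^ (p - 2)) * (m * r) := by ring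
    _ ≤ (d + m * r) ^ (p - 2) * (m * r) :=
        mul_le_mul_of_nonneg_right key (by positivity)

lemma Phi_scale (hp : 1 < p) (hd : 0 ≤ d) {m s : ℝ} (hm0 : 0 ≤ m) (hm1 : m ≤ 1) (hs : 0 ≤ s) :
    m ^ (max p 2) * Phi p d s ≤ Phi p d (m * s) := by
  rcases eq_or_lt_of_le hm0 with h | h
  · rw [← h, Real.zero_rpow (ne_of_gt (lt_of_lt_of_le zero_lt_two (le_max_right p 2))),
      zero_mul, zero_mul, Phi, intervalIntegral.integral_same]
  · have e1 : Phi p d (m * s) = m * ∫ r in (0:ℝ)..s, g p d (m * r) := by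
      have h1 := intervalIntegral.smul_integral_comp_mul_left (g p d) (a := 0) (b := s) m
      rw [mul_zero, smul_eq_mul] at h1
      rw [Phi, ← h1]
    have hsplit : m ^ max p 2 = m * m ^ (max p 2 - 1) := by
      have h2 := Real.rpow_add_one h.ne' (max p 2 - 1)
      rw [show max p 2 - 1 + 1 = max p 2 from by ring] at h2
      rw [h2, mul_comm]
    have e2 : m ^ (max p 2) * Phi p d s = m * ∫ r in (0:ℝ)..s, m ^ (max p 2 - 1) * g p d r := by
      rw [intervalIntegral.integral_const_mul, Phi, hsplit]; ring
    rw [e1, e2]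
    apply mul_le_mul_of_nonneg_left _ h.le
    have hint1 : IntervalIntegrable (fun r => m ^ (max p 2 - 1) * g p d r) volume 0 s :=
      (g_intble hp hd le_rfl hs).const_mul _
    have hint2 : IntervalIntegrable (fun r => g p d (m * r)) volume 0 s := by
      apply ContinuousOn.intervalIntegrable
      apply ContinuousOn.comp (g_contOn hp hd) (Continuous.continuousOn (by continuity))
      intro x hx
      rw [Set.uIcc_of_le hs] at hx
      exact mul_nonneg h.le hx.1
    exact intervalIntegral.integral_mono_on hs hint1 hint2
      (fun r hr => g_scale hp hd h hm1 hr.1)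

lemma young_bound (hp : 1 < p) {K T : ℝ} (hK : 0 < K) (hT : 0 ≤ T) {s : ℝ} (hs : 0 ≤ s) :
    s * T - K * s ^ p / p ≤ (T / K ^ (1/p)) ^ (p/(p-1)) / (p/(p-1)) := by
  have hpq : p.HolderConjugate (p/(p-1)) := Real.HolderConjugate.conjExponent hp
  have hKp : (0:ℝ) < K ^ (1/p) := Real.rpow_pos_of_pos hK _
  have hy := Real.young_inequality_of_nonneg (mul_nonneg hKp.le hs) (div_nonneg hT hKp.le) hpq
  have e1 : K ^ (1/p) * s * (T / K ^ (1/p)) = s * T := by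
    field_simp
  have e2 : (K ^ (1/p) * s) ^ p = K * s ^ p := by
    rw [Real.mul_rpow hKp.le hs, ← Real.rpow_mul hK.le,
      one_div_mul_cancel (by linarith : p ≠ 0), Real.rpow_one]
  rw [e1, e2] at hy
  linarith

lemma bdd (hp : 1 < p) (hd : 0 ≤ d) {t : ℝ} (ht : 0 ≤ t) :
    ∃ M : ℝ, ∀ s : ℝ, 0 ≤ s → s * t - Phi p d s ≤ M := by
  obtain ⟨K0, K1, hK0, hK1, hlow⟩ :
      ∃ K0 K1 : ℝ, 0 < K0 ∧ 0 ≤ K1 ∧ ∀ r : ℝ, 0 ≤ r → K0 * r ^ (p-1) - K1 ≤ g p d r := by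
    rcases le_total 2 p with h2 | h2
    · refine ⟨1, 0, one_pos, le_refl 0, fun r hr => ?_⟩
      rw [one_mul, sub_zero]
      unfold g
      calc r ^ (p-1) = r ^ (p-2) * r := (rpow_mul_self hp hr).symm
        _ ≤ (d + r) ^ (p-2) * r :=
          mul_le_mul_of_nonneg_right (Real.rpow_le_rpow hr (by linarith) (by linarith)) hr
    · have hK0 : (0:ℝ) < (d+1) ^ (p-2) := Real.rpow_pos_of_pos (by linarith) _
      refine ⟨(d+1) ^ (p-2), (d+1) ^ (p-2), hK0, hK0.le, fun r hr => ?_⟩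
      rcases le_total r 1 with hr1 | hr1
      · have h1 : r ^ (p-1) ≤ 1 := Real.rpow_le_one hr hr1 (by linarith)
        have h2 : (d+1) ^ (p-2) * r ^ (p-1) ≤ (d+1) ^ (p-2) * 1 :=
          mul_le_mul_of_nonneg_left h1 hK0.le
        have h3 := g_nonneg (p := p) hd hr
        linarith
      · have hr0 : (0:ℝ) < r := by linarith
        have hdr : (0:ℝ) < d + r := by linarith
        have h1 : d + r ≤ (d+1) * r := by nlinarith
        have h2 : ((d+1) * r) ^ (p-2) ≤ (d + r) ^ (p-2) :=
          Real.rpow_le_rpow_of_nonpos hdr h1 (by linarith)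
        have h3 : (d+1) ^ (p-2) * r ^ (p-1) = ((d+1) * r) ^ (p-2) * r := by
          rw [Real.mul_rpow (by linarith) hr]
          rw [← rpow_mul_self hp hr0.le]
          ring
        have h4 : ((d+1) * r) ^ (p-2) * r ≤ (d + r) ^ (p-2) * r :=
          mul_le_mul_of_nonneg_right h2 hr0.le
        unfold g
        nlinarith
  have hPhiLow : ∀ s : ℝ, 0 ≤ s → K0 * s ^ p / p - K1 * s ≤ Phi p d s := by
    intro s hs
    have hint1 : IntervalIntegrable (fun r : ℝ => K0 * r ^ (p-1) - K1) volume 0 s :=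
      ((intervalIntegral.intervalIntegrable_rpow' (by linarith)).const_mul K0).sub
        intervalIntegrable_const
    have heq : (∫ r in (0:ℝ)..s, (K0 * r ^ (p-1) - K1)) = K0 * s ^ p / p - K1 * s := by
      rw [intervalIntegral.integral_sub
          ((intervalIntegral.intervalIntegrable_rpow' (by linarith)).const_mul K0)
          intervalIntegrable_const,
        intervalIntegral.integral_const_mul, integral_rpow (Or.inl (by linarith)),
        intervalIntegral.integral_const]
      rw [show p - 1 + 1 = p from by ring, Real.zero_rpow (by linarith : p ≠ 0)]
      simp [smul_eq_mul]
      ring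
    calc K0 * s ^ p / p - K1 * s = ∫ r in (0:ℝ)..s, (K0 * r ^ (p-1) - K1) := heq.symm
      _ ≤ Phi p d s := intervalIntegral.integral_mono_on hs hint1 (g_intble hp hd le_rfl hs)
          (fun r hr => hlow r hr.1)
  refine ⟨((t + K1) / K0 ^ (1/p)) ^ (p/(p-1)) / (p/(p-1)), fun s hs => ?_⟩
  have h1 := young_bound hp hK0 (by linarith : (0:ℝ) ≤ t + K1) hs
  have h2 := hPhiLow s hs
  have h3 : s * (t + K1) = s * t + K1 * s := by ring
  linarith

end Stmt13Aux

open Stmt13Aux in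
theorem stmt13 (p δ : ℝ) (hp : 1 < p) (hδ : 0 ≤ δ) :
    ∃ C > (0:ℝ), ∀ c ≥ (0:ℝ), ∀ l : ℝ, 0 ≤ l → l ≤ 1 → ∀ t ≥ (0:ℝ),
      fconj (shiftPhi p δ c) (l * t) ≤
        C * max (l ^ (p / (p - 1))) (l ^ (2:ℝ)) * fconj (shiftPhi p δ c) t := by
  refine ⟨1, one_pos, ?_⟩
  intro c hc l hl0 hl1 t ht
  have hd : (0:ℝ) ≤ δ + c := by linarith
  have hfc : ∀ x : ℝ, fconj (shiftPhi p δ c) x = fconj (Phi p (δ + c)) x := by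
    intro x
    unfold fconj
    congr 1
    apply Set.image_congr
    intro s hs
    rw [shiftPhi_eq p δ c s hδ hc hs]
  rw [hfc, hfc, one_mul]
  set q : ℝ := max p 2 with hq
  have hq2 : (2:ℝ) ≤ q := le_max_right p 2
  set q' : ℝ := q / (q - 1) with hq'
  have hq'1 : 1 < q' := by
    rw [hq', one_lt_div (by linarith : (0:ℝ) < q - 1)]; linarith
  have hq'pos : 0 < q' := by linarith
  have hp1 : (0:ℝ) < p - 1 := by linarith
  have hmax : max (l ^ (p / (p - 1))) (l ^ (2:ℝ)) = l ^ q' := by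
    rcases eq_or_lt_of_le hl0 with h0 | h0
    · rw [← h0, Real.zero_rpow (ne_of_gt (div_pos (by linarith) hp1)),
        Real.zero_rpow (by norm_num : (2:ℝ) ≠ 0), Real.zero_rpow hq'pos.ne', max_self]
    · rcases le_total p 2 with h2 | h2
      · have hqe : q' = 2 := by
          rw [hq', hq, max_eq_right h2]; norm_num
        rw [hqe, max_eq_right]
        apply Real.rpow_le_rpow_of_exponent_ge h0 hl1
        rw [le_div_iff₀ hp1]; linarith
      · have hqe : q' = p / (p - 1) := by rw [hq', hq, max_eq_left h2]
        rw [hqe, max_eq_left]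
        apply Real.rpow_le_rpow_of_exponent_ge h0 hl1
        rw [div_le_iff₀ hp1]; linarith
  rw [hmax]
  obtain ⟨M, hM⟩ := bdd hp hd ht
  have hBdd : BddAbove ((fun s => s * t - Phi p (δ + c) s) '' Set.Ici 0) := by
    refine ⟨M, ?_⟩
    rintro x ⟨s, hs, rfl⟩
    exact hM s hs
  have hmem0 : (0:ℝ) ∈ ((fun s => s * t - Phi p (δ + c) s) '' Set.Ici 0) :=
    ⟨0, Set.self_mem_Ici, by simp [Phi_zero]⟩
  have hB0 : 0 ≤ fconj (Phi p (δ + c)) t := le_csSup hBdd hmem0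
  show sSup ((fun s => s * (l * t) - Phi p (δ + c) s) '' Set.Ici 0) ≤
    l ^ q' * fconj (Phi p (δ + c)) t
  apply Real.sSup_le
  · rintro x ⟨s, hs, rfl⟩
    show s * (l * t) - Phi p (δ + c) s ≤ l ^ q' * fconj (Phi p (δ + c)) t
    rcases eq_or_lt_of_le hl0 with h0 | h0
    · rw [← h0, Real.zero_rpow hq'pos.ne', zero_mul, zero_mul, mul_zero]
      have := Phi_nonneg (p := p) hd hs
      linarith
    · set m : ℝ := l ^ (q' - 1) with hm
      have hm0 : 0 < m := Real.rpow_pos_of_pos h0 _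
      have hm1 : m ≤ 1 := Real.rpow_le_one hl0 hl1 (by linarith)
      set u : ℝ := s / m with hu
      have hu0 : 0 ≤ u := div_nonneg hs hm0.le
      have hsu : s = m * u := by
        rw [hu, mul_comm m, div_mul_cancel₀ s hm0.ne']
      have key : m ^ q * Phi p (δ + c) u ≤ Phi p (δ + c) s := by
        rw [hsu, hq]
        exact Phi_scale hp hd hm0.le hm1 hu0
      have hmq : m ^ q = l ^ q' := by
        rw [hm, ← Real.rpow_mul hl0]
        congr 1
        rw [hq']
        have hq1 : q - 1 ≠ 0 := by intro h'; rw [sub_eq_zero] at h'; linarith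
        field_simp
        ring
      have hml : m * l = l ^ q' := by
        rw [hm, ← Real.rpow_add_one h0.ne' (q' - 1)]
        congr 1
        ring
      have h1 : s * (l * t) = l ^ q' * (u * t) := by rw [hsu, ← hml]; ring
      have h2 : l ^ q' * Phi p (δ + c) u ≤ Phi p (δ + c) s := by rw [← hmq]; exact key
      have h3 : u * t - Phi p (δ + c) u ≤ fconj (Phi p (δ + c)) t :=
        le_csSup hBdd ⟨u, hu0, rfl⟩
      calc s * (l * t) - Phi p (δ + c) s ≤ l ^ q' * (u * t) - l ^ q' * Phi p (δ + c) u := by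
            rw [h1]; linarith
        _ = l ^ q' * (u * t - Phi p (δ + c) u) := by ring
        _ ≤ l ^ q' * fconj (Phi p (δ + c)) t :=
            mul_le_mul_of_nonneg_left h3 (Real.rpow_nonneg hl0 _)
  · exact mul_nonneg (Real.rpow_nonneg hl0 _) hB0
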